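/- arXiv:1508.00542 — 4 statements merged into one kernel-verified Lean document; each statement's English description precedes it below -/
import Mathlib

section
/- Let n ≥ 3 be odd and let the finite vertex set V be partitioned into classes U_1, …, U_n. If G is a realization of the degree sequence d : V → ℕ that is weakly consistent with the cycle skeleton on U_1, …, U_n, then 2 · e_G(U_1, U_2) = D(U_1) + Σ_{i=2}^{n} (−1)^i · D(U_i), where D(U) = Σ_{v ∈ U} d(v). -/
open SimpleGraph

variable {V : Type*}

/-- Degree of `v` in `G`, via `Set.ncard`. -/
noncomputable def gdeg (G : SimpleGraph V) (v : V) : ℕ := (G.neighborSet v).ncard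

/-- `G` realizes the degree sequence `d`. -/
def IsRealization (G : SimpleGraph V) (d : V → ℕ) : Prop := ∀ v, gdeg G v = d v

/-- Number of crossing edges of `G` w.r.t. the bipartition `(U, W)`. -/
noncomputable def crossCount (U W : Set V) (G : SimpleGraph V) : ℕ :=
  {e ∈ G.edgeSet | ∃ u ∈ U, ∃ w ∈ W, e = s(u, w)}.ncard

/-- Number of edges of `G` with one endpoint in `P` and the other in `Q`. -/
noncomputable def eCount (G : SimpleGraph V) (P Q : Set V) : ℕ :=
  {e ∈ G.edgeSet | ∃ p ∈ P, ∃ q ∈ Q, e = s(p, q)}.ncard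

/-- `r(G, G')`, the number of edges of `G` that are not edges of `G'`. -/
noncomputable def rdist (G G' : SimpleGraph V) : ℕ := (G.edgeSet \ G'.edgeSet).ncard

/-- `G'` is obtained from `G` by a swap all of whose four vertices lie in `A`. -/
def IsSwapWithin (A : Set V) (G G' : SimpleGraph V) : Prop :=
  ∃ a b c d : V, a ∈ A ∧ b ∈ A ∧ c ∈ A ∧ d ∈ A ∧
    a ≠ b ∧ a ≠ c ∧ a ≠ d ∧ b ≠ c ∧ b ≠ d ∧ c ≠ d ∧
    G.Adj a b ∧ G.Adj c d ∧ ¬ G.Adj b c ∧ ¬ G.Adj a d ∧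
    G'.edgeSet = (G.edgeSet \ {s(a, b), s(c, d)}) ∪ {s(b, c), s(a, d)}

/-- `G'` is obtained from `G` by a swap. -/
def IsSwap (G G' : SimpleGraph V) : Prop := IsSwapWithin Set.univ G G'

/-- `G'` is obtained from `G` by a double swap (two simultaneous disjoint swaps). -/
def IsDoubleSwap (G G' : SimpleGraph V) : Prop :=
  ∃ a b c d e f g h : V,
    List.Pairwise (· ≠ ·) [a, b, c, d, e, f, g, h] ∧
    G.Adj a b ∧ G.Adj c d ∧ G.Adj e f ∧ G.Adj g h ∧
    ¬ G.Adj b c ∧ ¬ G.Adj a d ∧ ¬ G.Adj f g ∧ ¬ G.Adj e h ∧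
    G'.edgeSet = (G.edgeSet \ {s(a, b), s(c, d), s(e, f), s(g, h)}) ∪
      {s(b, c), s(a, d), s(f, g), s(e, h)}

/-- The `i`-th edge of the closed walk whose vertices are listed (cyclically) by `c`. -/
def stepEdge (c : List V) (i : Fin c.length) : Sym2 V :=
  s(c.get i, c.get ⟨(i.val + 1) % c.length, Nat.mod_lt _ i.pos⟩)

/-- The set of edges of the closed walk listed by `c`. -/
def circuitEdges (c : List V) : Set (Sym2 V) := Set.range (stepEdge c)

/-- The vertex list `c` describes an alternating circuit of the pair `(G, G')`:
a closed walk of even positive length, with pairwise distinct edges, whose edges lie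
alternately in `E(G) \ E(G')` and `E(G') \ E(G)`, visiting no vertex more than twice. -/
def IsAltCircuit (G G' : SimpleGraph V) (c : List V) : Prop :=
  0 < c.length ∧ Even c.length ∧
  (∀ i j : Fin c.length, stepEdge c i = stepEdge c j → i = j) ∧
  (∀ i : Fin c.length, i.val % 2 = 0 → stepEdge c i ∈ G.edgeSet \ G'.edgeSet) ∧
  (∀ i : Fin c.length, i.val % 2 = 1 → stepEdge c i ∈ G'.edgeSet \ G.edgeSet) ∧
  (∀ v : V, {i : Fin c.length | c.get i = v}.ncard ≤ 2)

/-- A decomposition of `E(G) △ E(G')` into (edge sets of) alternating circuits. -/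
def IsAltCircuitDecomp (G G' : SimpleGraph V) (𝒞 : Finset (List V)) : Prop :=
  (∀ c ∈ 𝒞, IsAltCircuit G G' c) ∧
  (∀ c ∈ 𝒞, ∀ c' ∈ 𝒞, c ≠ c' → Disjoint (circuitEdges c) (circuitEdges c')) ∧
  (⋃ c ∈ 𝒞, circuitEdges c) = symmDiff G.edgeSet G'.edgeSet

/-- Number of edges of `G` whose endpoints have classes `P` and `Q` under `π`. -/
noncomputable def wcount {C : Type*} (π : V → C) (G : SimpleGraph V) (P Q : C) : ℕ :=
  {e ∈ G.edgeSet | ∃ x y : V, e = s(x, y) ∧ π x = P ∧ π y = Q}.ncard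

/-- Sum of the degree sequence over a class. -/
noncomputable def Dsum (d : V → ℕ) (U : Set V) : ℕ := ∑ᶠ v ∈ U, d v

/-- `G` is weakly consistent with the cycle skeleton on the classes `U 0, …, U (n-1)`. -/
def WeaklyCycleConsistent (n : ℕ) [NeZero n] (U : Fin n → Set V) (G : SimpleGraph V) : Prop :=
  ∀ e ∈ G.edgeSet, ∃ (i : Fin n) (x y : V), e = s(x, y) ∧ x ∈ U i ∧ y ∈ U (i + 1)

/-- `G` is weakly consistent with the skeleton graph `S` on the classes `U`. -/
def WeaklyConsistent {C : Type*} (U : C → Set V) (S : SimpleGraph C) (G : SimpleGraph V) : Prop :=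
  ∀ e ∈ G.edgeSet, ∃ (P Q : C) (x y : V), S.Adj P Q ∧ e = s(x, y) ∧ x ∈ U P ∧ y ∈ U Q

/-- `G'` is obtained from `G` by an `F`-swap all of whose vertices lie in `A`:
the edges and non-chord-restricted non-edges are exchanged along an alternating
circuit of chords `c` in which every parity-crossing non-circuit pair is forbidden. -/
def IsFSwapWithin (A : Set V) (F : Set (Sym2 V)) (G G' : SimpleGraph V) : Prop :=
  ∃ c : List V, (∀ v ∈ c, v ∈ A) ∧ 0 < c.length ∧ Even c.length ∧
    (∀ i j : Fin c.length, stepEdge c i = stepEdge c j → i = j) ∧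
    (∀ i : Fin c.length, i.val % 2 = 0 → stepEdge c i ∈ G.edgeSet) ∧
    (∀ i : Fin c.length, i.val % 2 = 1 → stepEdge c i ∉ G.edgeSet ∧ stepEdge c i ∉ F) ∧
    (∀ i j : Fin c.length, i.val % 2 ≠ j.val % 2 → c.get i ≠ c.get j →
      s(c.get i, c.get j) ∉ circuitEdges c → s(c.get i, c.get j) ∈ F) ∧
    G'.edgeSet = (G.edgeSet \ {e | ∃ i : Fin c.length, i.val % 2 = 0 ∧ e = stepEdge c i}) ∪
      {e | ∃ i : Fin c.length, i.val % 2 = 1 ∧ e = stepEdge c i}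
section Aux

lemma eCount_comm (G : SimpleGraph V) (P Q : Set V) : eCount G P Q = eCount G Q P := by
  unfold eCount
  congr 1
  ext e
  simp only [Set.mem_setOf_eq]
  constructor <;> rintro ⟨he, p, hp, q, hq, rfl⟩
  · exact ⟨he, q, hq, p, hp, Sym2.eq_swap⟩
  · exact ⟨he, q, hq, p, hp, Sym2.eq_swap⟩

open Classical in
lemma eCount_eq_sum [Fintype V] (G : SimpleGraph V) (P Q : Set V) (hPQ : Disjoint P Q) :
    eCount G P Q = ∑ v ∈ P.toFinset, (Q ∩ G.neighborSet v).toFinset.card := by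
  have hset : {e ∈ G.edgeSet | ∃ p ∈ P, ∃ q ∈ Q, e = s(p, q)}.toFinset =
      P.toFinset.biUnion (fun v => (Q ∩ G.neighborSet v).toFinset.image (fun w => s(v, w))) := by
    ext e
    simp only [Set.mem_toFinset, Set.mem_setOf_eq, Finset.mem_biUnion, Finset.mem_image,
      Set.mem_toFinset, Set.mem_inter_iff, SimpleGraph.mem_neighborSet]
    constructor
    · rintro ⟨he, p, hp, q, hq, rfl⟩
      exact ⟨p, hp, q, ⟨hq, (SimpleGraph.mem_edgeSet G).1 he⟩, rfl⟩
    · rintro ⟨p, hp, q, ⟨hq, hadj⟩, rfl⟩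
      exact ⟨(SimpleGraph.mem_edgeSet G).2 hadj, p, hp, q, hq, rfl⟩
  rw [eCount, Set.ncard_eq_toFinset_card', hset, Finset.card_biUnion]
  · refine Finset.sum_congr rfl fun v _ => ?_
    refine Finset.card_image_of_injOn fun w _ w' _ hww => Sym2.congr_right.1 hww
  · intro x hx y hy hxy
    rw [Function.onFun, Finset.disjoint_left]
    rintro e he he'
    simp only [Finset.mem_image, Set.mem_toFinset, Set.mem_inter_iff,
      SimpleGraph.mem_neighborSet] at he he'
    obtain ⟨w, ⟨hwQ, -⟩, rfl⟩ := he
    obtain ⟨w', ⟨hw'Q, -⟩, hE⟩ := he'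
    rw [Finset.mem_coe, Set.mem_toFinset] at hx hy
    rw [Sym2.eq_iff] at hE
    rcases hE with ⟨rfl, rfl⟩ | ⟨rfl, rfl⟩
    · exact hxy rfl
    · exact hPQ.ne_of_mem hy hwQ rfl

open Classical in
lemma Dsum_toFinset [Fintype V] (d : V → ℕ) (P : Set V) :
    Dsum d P = ∑ v ∈ P.toFinset, d v := by
  rw [Dsum, ← finsum_mem_coe_finset, Set.coe_toFinset]

open Classical in
lemma class_degree_split [Fintype V] (n : ℕ) [NeZero n] (hn : 3 ≤ n) (U : Fin n → Set V)
    (hdis : ∀ i j : Fin n, i ≠ j → Disjoint (U i) (U j))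
    (G : SimpleGraph V) (hwG : WeaklyCycleConsistent n U G)
    (i : Fin n) {v : V} (hv : v ∈ U i) :
    gdeg G v = (U (i - 1) ∩ G.neighborSet v).toFinset.card
      + (U (i + 1) ∩ G.neighborSet v).toFinset.card := by
  have hmem : ∀ {j k : Fin n}, v ∈ U j → v ∈ U k → j = k := by
    intro j k hj hk
    by_contra h
    exact (hdis j k h).ne_of_mem hj hk rfl
  have hsub : G.neighborSet v ⊆ U (i - 1) ∪ U (i + 1) := by
    intro w hw
    rw [SimpleGraph.mem_neighborSet] at hw
    obtain ⟨j, x, y, hE, hx, hy⟩ := hwG s(v, w) ((SimpleGraph.mem_edgeSet G).2 hw)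
    rw [Sym2.eq_iff] at hE
    rcases hE with ⟨rfl, rfl⟩ | ⟨rfl, rfl⟩
    · have : i = j := hmem hv hx
      subst this
      exact Or.inr hy
    · have : i = j + 1 := hmem hv hy
      have hj : j = i - 1 := by rw [this]; open Fin.CommRing in ring
      rw [hj] at hx
      exact Or.inl hx
  have hne : i - 1 ≠ i + 1 := by
    intro h
    have h2 : (2 : Fin n) = 0 := by open Fin.CommRing in linear_combination -h
    have hv2 : ((2 : Fin n) : ℕ) = 2 % n := Fin.coe_ofNat_eq_mod n 2
    rw [h2] at hv2
    rw [Nat.mod_eq_of_lt (by omega)] at hv2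
    simp at hv2
  have hsplit : G.neighborSet v =
      (U (i - 1) ∩ G.neighborSet v) ∪ (U (i + 1) ∩ G.neighborSet v) := by
    rw [← Set.union_inter_distrib_right, Set.inter_eq_right.2]
    exact hsub
  have key : (G.neighborSet v).ncard =
      (U (i - 1) ∩ G.neighborSet v).ncard + (U (i + 1) ∩ G.neighborSet v).ncard := by
    conv_lhs => rw [hsplit]
    exact Set.ncard_union_eq ((hdis _ _ hne).mono Set.inter_subset_left
      Set.inter_subset_left) (Set.toFinite _) (Set.toFinite _)
  rw [gdeg, key, Set.ncard_eq_toFinset_card', Set.ncard_eq_toFinset_card']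

lemma fin_one_ne_zero' (n : ℕ) [NeZero n] (hn : 3 ≤ n) : (1 : Fin n) ≠ 0 := by
  intro h
  have h1 : ((1 : Fin n) : ℕ) = 1 % n := Fin.coe_ofNat_eq_mod n 1
  rw [h, Nat.mod_eq_of_lt (by omega)] at h1
  simp at h1

open Classical in
lemma Dsum_eq_eCount [Fintype V] (n : ℕ) [NeZero n] (hn : 3 ≤ n) (U : Fin n → Set V)
    (hdis : ∀ i j : Fin n, i ≠ j → Disjoint (U i) (U j))
    (d : V → ℕ) (G : SimpleGraph V) (hG : IsRealization G d)
    (hwG : WeaklyCycleConsistent n U G) (i : Fin n) :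
    Dsum d (U i) = eCount G (U (i - 1)) (U i) + eCount G (U i) (U (i + 1)) := by
  have h1 : (1 : Fin n) ≠ 0 := fin_one_ne_zero' n hn
  have hne1 : i ≠ i - 1 := fun h => h1 (by open Fin.CommRing in linear_combination h)
  have hne2 : i ≠ i + 1 := fun h => h1 (by open Fin.CommRing in linear_combination -h)
  rw [eCount_comm, eCount_eq_sum G (U i) (U (i - 1)) (hdis _ _ hne1),
    eCount_eq_sum G (U i) (U (i + 1)) (hdis _ _ hne2), Dsum_toFinset,
    ← Finset.sum_add_distrib]
  refine Finset.sum_congr rfl fun v hv => ?_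
  rw [Set.mem_toFinset] at hv
  rw [← hG v, class_degree_split n hn U hdis G hwG i hv]

end Aux

/-- For an odd cycle skeleton, the number of edges on the first bone is determined by the
alternating sum of the class degree sums:
`2·e(U₁,U₂) = D(U₁) + Σ_{i=2}^{n} (-1)^i D(U_i)` (here `0`-indexed). -/
theorem odd_cycle_weight_formula {V : Type*} [Fintype V] (n : ℕ) [NeZero n]
    (hn : 3 ≤ n) (hodd : Odd n) (U : Fin n → Set V)
    (hdis : ∀ i j : Fin n, i ≠ j → Disjoint (U i) (U j))
    (hcov : (⋃ i, U i) = Set.univ)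
    (d : V → ℕ) (G : SimpleGraph V) (hG : IsRealization G d)
    (hwG : WeaklyCycleConsistent n U G) :
    (2 * (eCount G (U 0) (U 1) : ℤ)) =
      ∑ j : Fin n, (if j.val = 0 then 1 else (-1 : ℤ) ^ (j.val + 1)) * (Dsum d (U j) : ℤ) := by
  classical
  have h1 : (1 : Fin n) ≠ 0 := fin_one_ne_zero' n hn
  have h1v : ((1 : Fin n) : ℕ) = 1 := by
    rw [Fin.coe_ofNat_eq_mod, Nat.mod_eq_of_lt (by omega)]
  set S : Fin n → ℤ := fun j => if j.val = 0 then 1 else (-1 : ℤ) ^ (j.val + 1) with hS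
  set E : Fin n → ℤ := fun j => (eCount G (U j) (U (j + 1)) : ℤ) with hE
  have hD : ∀ j : Fin n, (Dsum d (U j) : ℤ) = E (j - 1) + E j := by
    intro j
    rw [Dsum_eq_eCount n hn U hdis d G hG hwG j]
    push_cast
    rw [hE]
    simp only [sub_add_cancel]
  have step1 : ∑ j : Fin n, S j * (Dsum d (U j) : ℤ) = ∑ j : Fin n, (S j + S (j + 1)) * E j := by
    calc ∑ j : Fin n, S j * (Dsum d (U j) : ℤ)
        = ∑ j : Fin n, (S j * E (j - 1) + S j * E j) := by
          refine Finset.sum_congr rfl fun j _ => ?_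
          rw [hD j]; ring
      _ = (∑ j : Fin n, S j * E (j - 1)) + ∑ j : Fin n, S j * E j :=
          Finset.sum_add_distrib
      _ = (∑ j : Fin n, S (j + 1) * E j) + ∑ j : Fin n, S j * E j := by
          congr 1
          exact (Fintype.sum_equiv (Equiv.addRight (1 : Fin n))
            (fun j => S (j + 1) * E j) (fun j => S j * E (j - 1))
            (fun j => by simp)).symm
      _ = ∑ j : Fin n, (S j + S (j + 1)) * E j := by
          rw [← Finset.sum_add_distrib]
          refine Finset.sum_congr rfl fun j _ => ?_
          ring
  have hcoef : ∀ j : Fin n, S j + S (j + 1) = if j = 0 then 2 else 0 := by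
    intro j
    by_cases hj : j = 0
    · subst hj
      have : (0 : Fin n) + 1 = 1 := by open Fin.CommRing in ring
      rw [this]
      simp only [hS, Fin.val_zero, if_pos rfl, h1v]
      norm_num
    · have hjv : j.val ≠ 0 := fun h => hj (Fin.ext (by simp [h]))
      rw [if_neg hj]
      by_cases hlast : j.val + 1 = n
      · have hj10 : j + 1 = 0 := by
          apply Fin.ext
          rw [Fin.val_add, h1v, hlast, Nat.mod_self, Fin.val_zero]
        rw [hj10]
        simp only [hS, Fin.val_zero, if_pos rfl, if_neg hjv]
        have : j.val + 1 = n := hlast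
        rw [this, hodd.neg_one_pow]
        norm_num
      · have hjb : j.val + 1 < n := lt_of_le_of_ne (Nat.succ_le_of_lt j.isLt) hlast
        have hj1v : (j + 1).val = j.val + 1 := by
          rw [Fin.val_add, h1v, Nat.mod_eq_of_lt hjb]
        simp only [hS, if_neg hjv, hj1v, if_neg (Nat.succ_ne_zero j.val)]
        rw [pow_succ (-1 : ℤ) (j.val + 1)]
        ring
  have step2 : ∑ j : Fin n, (S j + S (j + 1)) * E j = 2 * E 0 := by
    calc ∑ j : Fin n, (S j + S (j + 1)) * E j
        = ∑ j : Fin n, (if j = 0 then 2 * E j else 0) := by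
          refine Finset.sum_congr rfl fun j _ => ?_
          rw [hcoef j]
          by_cases hj : j = 0 <;> simp [hj]
      _ = 2 * E 0 := by
          rw [Finset.sum_ite_eq' Finset.univ (0 : Fin n) (fun j => 2 * E j)]
          simp
  have hE0 : E 0 = (eCount G (U 0) (U 1) : ℤ) := by
    rw [hE]
    norm_num
  rw [← hE0]
  rw [show (∑ j : Fin n, (if j.val = 0 then 1 else (-1 : ℤ) ^ (j.val + 1)) * (Dsum d (U j) : ℤ))
      = ∑ j : Fin n, S j * (Dsum d (U j) : ℤ) from rfl, step1, step2]
end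

section
/- Let Π be a partition of the finite vertex set V and let T be a tree whose vertices are the classes of Π. If G and G' are realizations of the same degree sequence d : V → ℕ and both are weakly consistent with T (every edge of G, and of G', joins two classes that are adjacent in T), then for every pair of classes P, Q adjacent in T, the number of edges of G with one endpoint in P and the other in Q equals the corresponding number for G', i.e., e_G(P, Q) = e_{G'}(P, Q). -/
open SimpleGraph

variable {V : Type*}

section AuxTUW

variable {C : Type*}

private lemma aux_path_length {T : SimpleGraph C} (h : T.IsTree) {u v : C}
    (p : T.Walk u v) (hp : p.IsPath) : p.length = T.dist u v := by
  obtain ⟨q, hq, hl⟩ := h.isConnected.exists_path_of_dist u v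
  obtain ⟨r, -, hr⟩ := h.existsUnique_path u v
  rw [hr p hp, ← hr q hq]
  exact hl

private lemma aux_dist_adj {T : SimpleGraph C} (h : T.IsTree) (P : C) {A B : C}
    (hAB : T.Adj A B) :
    T.dist B P = T.dist A P + 1 ∨ T.dist A P = T.dist B P + 1 := by
  classical
  obtain ⟨p, hp, hl⟩ := h.isConnected.exists_path_of_dist A P
  by_cases hB : B ∈ p.support
  · right
    have hq := hp.takeUntil hB
    have hr := hp.dropUntil hB
    have hlen : (p.takeUntil B hB).length + (p.dropUntil B hB).length = p.length := by
      rw [← SimpleGraph.Walk.length_append, SimpleGraph.Walk.take_spec]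
    have h1 : (p.takeUntil B hB).length = T.dist A B := aux_path_length h _ hq
    have h2 : (p.dropUntil B hB).length = T.dist B P := aux_path_length h _ hr
    have h3 : T.dist A B = 1 := SimpleGraph.dist_eq_one_iff_adj.mpr hAB
    omega
  · left
    have hq : (SimpleGraph.Walk.cons hAB.symm p).IsPath :=
      (SimpleGraph.Walk.cons_isPath_iff _ _).2 ⟨hp, hB⟩
    have h1 : (SimpleGraph.Walk.cons hAB.symm p).length = T.dist B P :=
      aux_path_length h _ hq
    rw [SimpleGraph.Walk.length_cons, hl] at h1
    omega

private lemma aux_handshake {V : Type*} [Fintype V] [DecidableEq V]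
    (G : SimpleGraph V) [DecidableRel G.Adj] (χ : V → ℤ)
    (w : Sym2 V → ℤ) (hw : ∀ x y, w s(x, y) = χ x + χ y) :
    ∑ e ∈ G.edgeFinset, w e = ∑ v, χ v * G.degree v := by
  have step : ∀ e ∈ G.edgeFinset, w e = ∑ v, if v ∈ e then χ v else 0 := by
    intro e he
    induction e using Sym2.ind with
    | _ x y =>
      rw [SimpleGraph.mem_edgeFinset, SimpleGraph.mem_edgeSet] at he
      have hxy : x ≠ y := he.ne
      rw [hw, show (∑ v, if v ∈ s(x, y) then χ v else 0)
          = ∑ v ∈ Finset.univ.filter (· ∈ s(x, y)), χ v from (Finset.sum_filter _ _).symm]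
      have hfil : Finset.univ.filter (· ∈ s(x, y)) = {x, y} := by
        ext v; simp [Sym2.mem_iff]
      rw [hfil, Finset.sum_pair hxy]
  rw [Finset.sum_congr rfl step, Finset.sum_comm]
  refine Finset.sum_congr rfl fun v _ => ?_
  rw [show (∑ e ∈ G.edgeFinset, if v ∈ e then χ v else 0)
      = ∑ e ∈ G.edgeFinset.filter (v ∈ ·), χ v from (Finset.sum_filter _ _).symm]
  rw [Finset.sum_const, ← SimpleGraph.incidenceFinset_eq_filter,
    SimpleGraph.card_incidenceFinset_eq_degree, nsmul_eq_mul, mul_comm]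

end AuxTUW

/-- For a tree skeleton, any two weakly consistent realizations of the same degree sequence
have the same number of edges on every bone. -/
theorem tree_unique_weight {V : Type*} {C : Type*} [Fintype V] [Fintype C]
    (U : C → Set V)
    (hdis : ∀ P Q : C, P ≠ Q → Disjoint (U P) (U Q))
    (hcov : (⋃ P, U P) = Set.univ)
    (T : SimpleGraph C) (htree : T.IsTree)
    (d : V → ℕ) (G G' : SimpleGraph V)
    (hG : IsRealization G d) (hG' : IsRealization G' d)
    (hwG : WeaklyConsistent U T G) (hwG' : WeaklyConsistent U T G')
    (P Q : C) (hPQ : T.Adj P Q) :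
    eCount G (U P) (U Q) = eCount G' (U P) (U Q) := by
  classical
  have hclass : ∀ (R R' : C) (z : V), z ∈ U R → z ∈ U R' → R = R' := by
    intro R R' z hz hz'
    by_contra hne
    exact Set.disjoint_left.mp (hdis R R' hne) hz hz'
  set S : Set C := {R | (T \ fromEdgeSet {s(P, Q)}).Reachable P R} with hSdef
  have hPS : P ∈ S := SimpleGraph.Reachable.refl P
  have hQS : Q ∉ S := by
    have hb : T.IsBridge s(P, Q) :=
      (SimpleGraph.isAcyclic_iff_forall_adj_isBridge.mp htree.2) hPQ
    exact SimpleGraph.isBridge_iff.mp hb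
  have hcross : ∀ A B : C, T.Adj A B → A ∈ S → B ∉ S → A = P ∧ B = Q := by
    intro A B hAB hA hB
    by_cases he : s(A, B) = s(P, Q)
    · rcases Sym2.eq_iff.mp he with ⟨rfl, rfl⟩ | ⟨rfl, rfl⟩
      · exact ⟨rfl, rfl⟩
      · exact absurd hA hQS
    · exfalso
      apply hB
      refine hA.trans ⟨SimpleGraph.Walk.cons ?_ SimpleGraph.Walk.nil⟩
      rw [SimpleGraph.sdiff_adj]
      refine ⟨hAB, ?_⟩
      rw [SimpleGraph.fromEdgeSet_adj]
      rintro ⟨h1, -⟩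
      exact he h1
  set f : C → ℤ := fun R => (-1 : ℤ) ^ (T.dist R P) with hfdef
  have hsgn : ∀ A B : C, T.Adj A B → f A + f B = 0 := by
    intro A B hAB
    rcases aux_dist_adj htree P hAB with h | h <;>
      simp [hfdef, h, pow_succ] <;> ring
  set χ : V → ℤ := fun v => ∑ R : C, if v ∈ U R ∧ R ∈ S then f R else 0 with hχdef
  have hχ : ∀ (A : C) (x : V), x ∈ U A → χ x = if A ∈ S then f A else 0 := by
    intro A x hx
    show (∑ R : C, if x ∈ U R ∧ R ∈ S then f R else 0) = _
    rw [Finset.sum_eq_single A]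
    · simp [hx]
    · intro R _ hne
      rw [if_neg]
      rintro ⟨hxR, -⟩
      exact hne (hclass R A x hxR hx)
    · intro h
      exact absurd (Finset.mem_univ A) h
  set w : Sym2 V → ℤ := Sym2.lift ⟨fun x y => χ x + χ y, fun x y => by ring⟩ with hwdef
  have hw : ∀ x y, w s(x, y) = χ x + χ y := fun x y => rfl
  have hfP : f P = 1 := by simp [hfdef, SimpleGraph.dist_self]
  have key : ∀ (H : SimpleGraph V), WeaklyConsistent U T H → ∀ e ∈ H.edgeSet,
      w e = if (∃ p ∈ U P, ∃ q ∈ U Q, e = s(p, q)) then 1 else 0 := by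
    intro H hwc e he
    obtain ⟨A, B, x, y, hAB, rfl, hx, hy⟩ := hwc e he
    rw [hw, hχ A x hx, hχ B y hy]
    by_cases hA : A ∈ S <;> by_cases hB : B ∈ S
    · rw [if_pos hA, if_pos hB, if_neg, hsgn A B hAB]
      rintro ⟨p, hp, q, hq, hpq⟩
      rcases Sym2.eq_iff.mp hpq with ⟨rfl, rfl⟩ | ⟨rfl, rfl⟩
      · exact hQS (hclass B Q y hy hq ▸ hB)
      · exact hQS (hclass A Q x hx hq ▸ hA)
    · obtain ⟨rfl, rfl⟩ := hcross A B hAB hA hB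
      rw [if_pos hA, if_neg hB, if_pos ⟨x, hx, y, hy, rfl⟩, hfP]
      ring
    · obtain ⟨rfl, rfl⟩ := hcross B A hAB.symm hB hA
      rw [if_neg hA, if_pos hB, if_pos ⟨y, hy, x, hx, Sym2.eq_swap⟩, hfP]
      ring
    · rw [if_neg hA, if_neg hB, if_neg]
      · ring
      · rintro ⟨p, hp, q, hq, hpq⟩
        rcases Sym2.eq_iff.mp hpq with ⟨rfl, rfl⟩ | ⟨rfl, rfl⟩
        · exact hA (hclass A P x hx hp ▸ hPS)
        · exact hB (hclass B P y hy hp ▸ hPS)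
  have main : ∀ (H : SimpleGraph V), WeaklyConsistent U T H → IsRealization H d →
      (eCount H (U P) (U Q) : ℤ) = ∑ v, χ v * (d v : ℤ) := by
    intro H hwc hreal
    haveI : DecidableRel H.Adj := Classical.decRel _
    have hdeg : ∀ v, (H.degree v : ℤ) = (d v : ℤ) := by
      intro v
      rw [← hreal v]
      congr 1
      rw [gdeg, Set.ncard_eq_toFinset_card', ← SimpleGraph.neighborFinset_def]
      rfl
    have hset : {e ∈ H.edgeSet | ∃ p ∈ U P, ∃ q ∈ U Q, e = s(p, q)}
        = ↑(H.edgeFinset.filter (fun e => ∃ p ∈ U P, ∃ q ∈ U Q, e = s(p, q))) := by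
      ext e
      simp [Set.mem_setOf_eq, SimpleGraph.mem_edgeFinset]
    rw [eCount, hset, Set.ncard_coe_finset, ← Finset.sum_boole,
      Finset.sum_congr rfl (fun e he =>
        (key H hwc e (SimpleGraph.mem_edgeFinset.mp he)).symm)]
    refine (aux_handshake H χ w hw).trans ?_
    refine Finset.sum_congr rfl fun v _ => ?_
    rw [hdeg]
  have e1 := main G hwG hG
  have e2 := main G' hwG' hG'
  exact_mod_cast e1.trans e2.symm
end

section
/- Let Π be a partition of the finite vertex set V and let S be a connected loopless graph on the classes of Π that contains exactly one cycle, and suppose this cycle has odd length. If G and G' are realizations of the same degree sequence d : V → ℕ and both are weakly consistent with S, then for every pair of classes P, Q adjacent in S, e_G(P, Q) = e_{G'}(P, Q). -/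
open SimpleGraph

variable {V : Type*}

open Finset in

lemma walk_sign {C : Type*} (S : SimpleGraph C) (x : C → ℚ)
    (hx : ∀ a b, S.Adj a b → x a + x b = 0) :
    ∀ {u v : C} (p : S.Walk u v), x v = (-1 : ℚ) ^ p.length * x u := by
  intro u v p
  induction p with
  | nil => simp
  | @cons a b c h p ih =>
      have hw : x b = - x a := by linarith [hx a b h]
      rw [SimpleGraph.Walk.length_cons, ih, hw, pow_succ]
      ring

lemma core_lemma {C : Type*} [Fintype C] [DecidableEq C] (S : SimpleGraph C) (hconn : S.Connected)
    (hcount : S.edgeSet.ncard = Fintype.card C)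
    (hodd : ∀ (x : C) (w : S.Walk x x), w.IsCycle → Odd w.length)
    (g : Sym2 C → ℤ) [Fintype ↑S.edgeSet]
    (hsum : ∀ P : C, ∑ e ∈ S.edgeFinset, (if P ∈ e then g e else 0) = 0) :
    ∀ e ∈ S.edgeFinset, g e = 0 := by
  classical
  have hEcard : S.edgeFinset.card = Fintype.card C := by
    have := Set.ncard_coe_finset S.edgeFinset; rw [SimpleGraph.coe_edgeFinset] at this; omega
  -- the incidence linear map
  let B : (C → ℚ) →ₗ[ℚ] (↥S.edgeFinset → ℚ) :=
    { toFun := fun x e => ∑ P : C, if P ∈ (e : Sym2 C) then x P else 0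
      map_add' := by
        intro x y; funext e
        simp only [Pi.add_apply, ← Finset.sum_add_distrib]
        refine Finset.sum_congr rfl fun P _ => ?_
        split <;> simp
      map_smul' := by
        intro c x; funext e
        simp only [Pi.smul_apply, RingHom.id_apply, Finset.smul_sum, smul_ite, smul_zero] }
  have hBval : ∀ (x : C → ℚ) (a b : C), a ≠ b → ∀ (h : s(a,b) ∈ S.edgeFinset),
      B x ⟨s(a,b), h⟩ = x a + x b := by
    intro x a b hne h
    show (∑ P : C, if P ∈ s(a,b) then x P else 0) = x a + x b
    have hsplit : ∀ P : C, (if P ∈ s(a,b) then x P else 0)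
        = (if P = a then x P else 0) + (if P = b then x P else 0) := by
      intro P
      by_cases h1 : P = a <;> by_cases h2 : P = b <;>
        simp [Sym2.mem_iff, h1, h2] <;> simp_all
    rw [Finset.sum_congr rfl (fun P _ => hsplit P), Finset.sum_add_distrib,
      Finset.sum_ite_eq' Finset.univ a x, Finset.sum_ite_eq' Finset.univ b x]
    simp
  -- injectivity
  have hinj : Function.Injective B := by
    rw [← LinearMap.ker_eq_bot, LinearMap.ker_eq_bot']
    intro x hx0
    have hx : ∀ a b, S.Adj a b → x a + x b = 0 := by
      intro a b hab
      have h : s(a,b) ∈ S.edgeFinset := by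
        rw [SimpleGraph.mem_edgeFinset]; exact hab
      have := congrFun hx0 ⟨s(a,b), h⟩
      rw [hBval x a b hab.ne h] at this
      exact this
    -- existence of an odd cycle
    have hnac : ¬ S.IsAcyclic := by
      intro hac
      have ht : S.IsTree := ⟨hconn, hac⟩
      have := ht.card_edgeFinset
      have hpos : 0 < Fintype.card C := Fintype.card_pos_iff.mpr hconn.nonempty
      omega
    simp only [SimpleGraph.IsAcyclic] at hnac
    push_neg at hnac
    obtain ⟨v, c, hc⟩ := hnac
    have hoddlen := hodd v c hc
    have hv0 : x v = 0 := by
      have := walk_sign S x hx c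
      rw [Odd.neg_one_pow hoddlen] at this
      linarith
    funext u
    have hr : S.Reachable v u := hconn.preconnected v u
    have hw := walk_sign S x hx hr.some
    rw [hv0, mul_zero] at hw
    simpa using hw
  -- surjectivity
  have hsurj : Function.Surjective B := by
    rw [← LinearMap.range_eq_top]
    apply Submodule.eq_top_of_finrank_eq
    rw [LinearMap.finrank_range_of_inj hinj,
      Module.finrank_fintype_fun_eq_card, Module.finrank_fintype_fun_eq_card,
      Fintype.card_coe, hEcard]
  -- pairing argument
  set gQ : ↥S.edgeFinset → ℚ := fun e => (g (e : Sym2 C) : ℚ) with hgQ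
  obtain ⟨x, hx⟩ := hsurj gQ
  have hpair : ∑ e : ↥S.edgeFinset, gQ e * B x e = 0 := by
    have : ∀ e : ↥S.edgeFinset, gQ e * B x e
        = ∑ P : C, (if P ∈ (e : Sym2 C) then gQ e * x P else 0) := by
      intro e
      show gQ e * (∑ P : C, if P ∈ (e : Sym2 C) then x P else 0) = _
      rw [Finset.mul_sum]
      exact Finset.sum_congr rfl fun P _ => by split <;> simp
    rw [Finset.sum_congr rfl fun e _ => this e, Finset.sum_comm]
    apply Finset.sum_eq_zero
    intro P _
    have hs := hsum P
    have hs' : ∑ e : ↥S.edgeFinset, (if P ∈ (e : Sym2 C) then gQ e else 0) = 0 := by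
      have h1 : (∑ e ∈ S.edgeFinset, if P ∈ e then (g e : ℚ) else 0) = 0 := by
        have h2 := congrArg (fun z : ℤ => (z : ℚ)) hs
        simp only [Int.cast_sum, Int.cast_zero, apply_ite (Int.cast : ℤ → ℚ)] at h2
        convert h2 using 2
      rw [Finset.sum_coe_sort S.edgeFinset (fun e => if P ∈ e then (g e : ℚ) else 0)]
      exact h1
    calc ∑ e : ↥S.edgeFinset, (if P ∈ (e:Sym2 C) then gQ e * x P else 0)
        = (∑ e : ↥S.edgeFinset, (if P ∈ (e:Sym2 C) then gQ e else 0)) * x P := by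
          rw [Finset.sum_mul]
          exact Finset.sum_congr rfl fun e _ => by split <;> simp
      _ = 0 := by rw [hs', zero_mul]
  rw [hx] at hpair
  have hsq : ∀ e : ↥S.edgeFinset, gQ e = 0 := by
    intro e
    have h0 : ∑ e : ↥S.edgeFinset, gQ e * gQ e = 0 := hpair
    have := (Finset.sum_eq_zero_iff_of_nonneg (fun e _ => mul_self_nonneg (gQ e))).mp h0 e (Finset.mem_univ e)
    exact mul_self_eq_zero.mp this
  intro e he
  have := hsq ⟨e, he⟩
  have h2 : ((g e : ℤ) : ℚ) = 0 := this
  exact_mod_cast h2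


lemma aux_edge_card {V C : Type*} [Fintype V] [DecidableEq V] [DecidableEq C]
    (cl : V → C) (U : C → Set V)
    (hmem : ∀ v, v ∈ U (cl v)) (hclU : ∀ v P, v ∈ U P → cl v = P)
    (H : SimpleGraph V) [Fintype ↑H.edgeSet] (P Q : C) :
    eCount H (U P) (U Q) = (H.edgeFinset.filter (fun e => Sym2.map cl e = s(P, Q))).card := by
  rw [eCount, ← Set.ncard_coe_finset]
  congr 1
  ext e
  simp only [Set.mem_setOf_eq, Finset.coe_filter, SimpleGraph.mem_edgeFinset,
    Set.mem_setOf_eq]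
  constructor
  · rintro ⟨he, p, hp, q, hq, rfl⟩
    refine ⟨he, ?_⟩
    rw [Sym2.map_pair_eq, hclU p P hp, hclU q Q hq]
  · rintro ⟨he, hmap⟩
    refine ⟨he, ?_⟩
    induction e with
    | _ x y =>
      rw [Sym2.map_pair_eq, Sym2.eq_iff] at hmap
      rcases hmap with ⟨hx, hy⟩ | ⟨hx, hy⟩
      · exact ⟨x, hx ▸ hmem x, y, hy ▸ hmem y, rfl⟩
      · exact ⟨y, hy ▸ hmem y, x, hx ▸ hmem x, Sym2.eq_swap⟩

lemma aux_per_edge {V C : Type*} [Fintype V] [DecidableEq V] [DecidableEq C]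
    (cl : V → C) (S : SimpleGraph C) (H : SimpleGraph V)
    (hw : ∀ e ∈ H.edgeSet, Sym2.map cl e ∈ S.edgeSet) (P : C)
    (e : Sym2 V) (he : e ∈ H.edgeSet) :
    (Finset.univ.filter (fun v => cl v = P ∧ v ∈ e)).card
      = if P ∈ Sym2.map cl e then 1 else 0 := by
  induction e with
  | _ x y =>
    have hxy : x ≠ y := fun h => (H.not_isDiag_of_mem_edgeSet he) (by simp [h])
    have hPP : ¬(cl x = P ∧ cl y = P) := by
      rintro ⟨h1, h2⟩
      have := hw _ he
      rw [Sym2.map_pair_eq, h1, h2] at this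
      exact S.not_isDiag_of_mem_edgeSet this (by simp)
    rw [Sym2.map_pair_eq]
    by_cases h1 : cl x = P <;> by_cases h2 : cl y = P
    · exact absurd ⟨h1, h2⟩ hPP
    · have : Finset.univ.filter (fun v => cl v = P ∧ v ∈ s(x,y)) = {x} := by
        ext v; simp only [Finset.mem_filter, Finset.mem_univ, true_and, Sym2.mem_iff,
          Finset.mem_singleton]
        constructor
        · rintro ⟨hv, rfl | rfl⟩ <;> [rfl; exact absurd hv h2]
        · rintro rfl; exact ⟨h1, Or.inl rfl⟩
      rw [this]; simp [Sym2.mem_iff, h1]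
    · have : Finset.univ.filter (fun v => cl v = P ∧ v ∈ s(x,y)) = {y} := by
        ext v; simp only [Finset.mem_filter, Finset.mem_univ, true_and, Sym2.mem_iff,
          Finset.mem_singleton]
        constructor
        · rintro ⟨hv, rfl | rfl⟩ <;> [exact absurd hv h1; rfl]
        · rintro rfl; exact ⟨h2, Or.inr rfl⟩
      rw [this]; simp [Sym2.mem_iff, h2]
    · have : Finset.univ.filter (fun v => cl v = P ∧ v ∈ s(x,y)) = ∅ := by
        ext v; simp only [Finset.mem_filter, Finset.mem_univ, true_and, Sym2.mem_iff,
          Finset.notMem_empty, iff_false, not_and]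
        rintro hv (rfl | rfl) <;> [exact h1 hv; exact h2 hv]
      rw [this]
      simp only [Finset.card_empty, Sym2.mem_iff]
      have : ¬(P = cl x ∨ P = cl y) := by
        rintro (rfl | rfl) <;> [exact h1 rfl; exact h2 rfl]
      simp [this]

lemma aux_vertex_sum {V C : Type*} [Fintype V] [DecidableEq V] [DecidableEq C]
    (cl : V → C) (S : SimpleGraph C) (H : SimpleGraph V)
    [Fintype ↑H.edgeSet] [Fintype ↑S.edgeSet] [∀ v : V, Fintype ↑(H.neighborSet v)]
    (hw : ∀ e ∈ H.edgeSet, Sym2.map cl e ∈ S.edgeSet) (P : C) :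
    ∑ ε ∈ S.edgeFinset,
        (if P ∈ ε then (H.edgeFinset.filter (fun e => Sym2.map cl e = ε)).card else 0)
      = ∑ v ∈ Finset.univ.filter (fun v => cl v = P), H.degree v := by
  -- LHS = number of edges of H with exactly one endpoint of class P
  have hL : ∑ ε ∈ S.edgeFinset,
        (if P ∈ ε then (H.edgeFinset.filter (fun e => Sym2.map cl e = ε)).card else 0)
      = (H.edgeFinset.filter (fun e => P ∈ Sym2.map cl e)).card := by
    rw [← Finset.sum_filter]
    rw [Finset.card_eq_sum_card_fiberwise
      (f := Sym2.map cl) (s := H.edgeFinset.filter (fun e => P ∈ Sym2.map cl e))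
      (t := S.edgeFinset.filter (fun ε => P ∈ ε))
      (fun e he => by
        simp only [Finset.mem_coe, Finset.mem_filter, SimpleGraph.mem_edgeFinset] at he ⊢
        exact ⟨hw _ he.1, he.2⟩)]
    refine Finset.sum_congr rfl fun ε hε => ?_
    congr 1
    rw [Finset.filter_filter]
    refine Finset.filter_congr fun e he => ?_
    have hPε : P ∈ ε := (Finset.mem_filter.mp hε).2
    exact ⟨fun h => ⟨by rw [h]; exact hPε, h⟩, fun h => h.2⟩
  rw [hL]
  -- RHS
  have hR : ∀ v : V, H.degree v = (H.edgeFinset.filter (fun e => v ∈ e)).card := by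
    intro v
    rw [← SimpleGraph.card_incidenceFinset_eq_degree, SimpleGraph.incidenceFinset_eq_filter]
  calc (H.edgeFinset.filter (fun e => P ∈ Sym2.map cl e)).card
      = ∑ e ∈ H.edgeFinset, (if P ∈ Sym2.map cl e then 1 else 0) := by
        rw [← Finset.sum_filter]; simp
    _ = ∑ e ∈ H.edgeFinset, (Finset.univ.filter (fun v => cl v = P ∧ v ∈ e)).card := by
        refine Finset.sum_congr rfl fun e he => ?_
        rw [aux_per_edge cl S H hw P e (SimpleGraph.mem_edgeFinset.mp he)]
    _ = ∑ e ∈ H.edgeFinset, ∑ v ∈ Finset.univ.filter (fun v => cl v = P),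
          (if v ∈ e then 1 else 0) := by
        refine Finset.sum_congr rfl fun e _ => ?_
        rw [← Finset.sum_filter, Finset.filter_filter]
        simp
    _ = ∑ v ∈ Finset.univ.filter (fun v => cl v = P), ∑ e ∈ H.edgeFinset,
          (if v ∈ e then 1 else 0) := Finset.sum_comm
    _ = ∑ v ∈ Finset.univ.filter (fun v => cl v = P), H.degree v := by
        refine Finset.sum_congr rfl fun v _ => ?_
        rw [hR v, ← Finset.sum_filter]; simp

/-- For a connected skeleton with exactly one cycle, the cycle being odd, any two weakly
consistent realizations of the same degree sequence have the same number of edges on every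
bone. -/
theorem odd_unicyclic_unique_weight {V : Type*} {C : Type*} [Fintype V] [Fintype C]
    (U : C → Set V)
    (hdis : ∀ P Q : C, P ≠ Q → Disjoint (U P) (U Q))
    (hcov : (⋃ P, U P) = Set.univ)
    (S : SimpleGraph C) (hconn : S.Connected)
    (hcount : S.edgeSet.ncard = Fintype.card C)
    (hodd : ∀ (x : C) (w : S.Walk x x), w.IsCycle → Odd w.length)
    (d : V → ℕ) (G G' : SimpleGraph V)
    (hG : IsRealization G d) (hG' : IsRealization G' d)
    (hwG : WeaklyConsistent U S G) (hwG' : WeaklyConsistent U S G')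
    (P Q : C) (hPQ : S.Adj P Q) :
    eCount G (U P) (U Q) = eCount G' (U P) (U Q) := by
  classical
  have hex : ∀ v : V, ∃ R, v ∈ U R := by
    intro v
    have : v ∈ ⋃ R, U R := hcov ▸ Set.mem_univ v
    simpa using this
  choose cl hmem using hex
  have hclU : ∀ v R, v ∈ U R → cl v = R := by
    intro v R hvR
    by_contra hne
    exact Set.disjoint_left.mp (hdis _ _ hne) (hmem v) hvR
  have hmap : ∀ (H : SimpleGraph V), WeaklyConsistent U S H →
      ∀ e ∈ H.edgeSet, Sym2.map cl e ∈ S.edgeSet := by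
    intro H hwH e he
    obtain ⟨R, T, x, y, hadj, rfl, hx, hy⟩ := hwH e he
    rw [Sym2.map_pair_eq, hclU x R hx, hclU y T hy]
    exact hadj
  have hdeg : ∀ (H : SimpleGraph V), IsRealization H d → ∀ v, H.degree v = d v := by
    intro H hH v
    rw [← hH v, gdeg, Set.ncard_eq_toFinset_card', Set.toFinset_card,
      SimpleGraph.card_neighborSet_eq_degree]
  set g : Sym2 C → ℤ := fun ε => ((G.edgeFinset.filter (fun e => Sym2.map cl e = ε)).card : ℤ)
      - ((G'.edgeFinset.filter (fun e => Sym2.map cl e = ε)).card : ℤ) with hg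
  have hvs : ∀ (H : SimpleGraph V), IsRealization H d → WeaklyConsistent U S H →
      ∀ R : C, ∑ ε ∈ S.edgeFinset,
        (if R ∈ ε then ((H.edgeFinset.filter (fun e => Sym2.map cl e = ε)).card : ℤ) else 0)
      = ((∑ v ∈ Finset.univ.filter (fun v => cl v = R), d v : ℕ) : ℤ) := by
    intro H hH hwH R
    have h1 := aux_vertex_sum cl S H (hmap H hwH) R
    have h2 : ∑ v ∈ Finset.univ.filter (fun v => cl v = R), H.degree v
        = ∑ v ∈ Finset.univ.filter (fun v => cl v = R), d v :=
      Finset.sum_congr rfl fun v _ => hdeg H hH v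
    rw [← h2, ← h1]
    push_cast [apply_ite (Nat.cast : ℕ → ℤ)]
    rfl
  have hsum : ∀ R : C, ∑ ε ∈ S.edgeFinset, (if R ∈ ε then g ε else 0) = 0 := by
    intro R
    have hsplit : ∀ ε : Sym2 C, (if R ∈ ε then g ε else 0)
        = (if R ∈ ε then ((G.edgeFinset.filter (fun e => Sym2.map cl e = ε)).card : ℤ) else 0)
          - (if R ∈ ε then ((G'.edgeFinset.filter (fun e => Sym2.map cl e = ε)).card : ℤ) else 0) := by
      intro ε; rw [hg]; split <;> simp
    rw [Finset.sum_congr rfl fun ε _ => hsplit ε, Finset.sum_sub_distrib,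
      hvs G hG hwG R, hvs G' hG' hwG' R, sub_self]
  have hcore := core_lemma S hconn hcount hodd g hsum s(P, Q)
    (SimpleGraph.mem_edgeFinset.mpr hPQ)
  have e1 := aux_edge_card cl U hmem hclU G P Q
  have e2 := aux_edge_card cl U hmem hclU G' P Q
  simp only [hg] at hcore
  rw [e1, e2]
  omega
end

section
/- Fix a bipartition of the finite vertex set V into two disjoint parts U and W, and let G and G' be realizations of the same degree sequence d : V → ℕ whose symmetric difference E(G) △ E(G') is the edge set of a single alternating circuit C all of whose vertices lie in U. Then there exists a sequence of graphs G = G_0, G_1, …, G_t = G' such that each G_{i+1} is obtained from G_i by a swap all four of whose vertices lie in U; consequently every G_i is a realization of d with ε(G_i) = ε(G). -/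
open SimpleGraph

variable {V : Type*}

open SimpleGraph

section SwapTheory
variable {V : Type*}

def swapGraph (H : SimpleGraph V) (a b c d : V) : SimpleGraph V :=
  SimpleGraph.fromEdgeSet ((H.edgeSet \ {s(a,b), s(c,d)}) ∪ {s(b,c), s(a,d)})

structure SwapData (H : SimpleGraph V) (a b c d : V) : Prop where
  hab : H.Adj a b
  hcd : H.Adj c d
  hbc : ¬ H.Adj b c
  had : ¬ H.Adj a d
  hac : a ≠ c
  hbd : b ≠ d
  hbc' : b ≠ c
  had' : a ≠ d

namespace SwapData

variable {H : SimpleGraph V} {a b c d : V}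

lemma rot1 (h : SwapData H a b c d) : SwapData H b a d c :=
  ⟨h.hab.symm, h.hcd.symm, h.had, h.hbc, h.hbd, h.hac, h.had', h.hbc'⟩

lemma rot2 (h : SwapData H a b c d) : SwapData H c d a b :=
  ⟨h.hcd, h.hab, fun h' => h.had h'.symm, fun h' => h.hbc h'.symm,
   h.hac.symm, h.hbd.symm, h.had'.symm, h.hbc'.symm⟩

end SwapData

lemma swapGraph_rot1 (H : SimpleGraph V) (a b c d : V) :
    swapGraph H a b c d = swapGraph H b a d c := by
  unfold swapGraph
  rw [show ({s(a,b), s(c,d)} : Set (Sym2 V)) = {s(b,a), s(d,c)} by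
        rw [@Sym2.eq_swap _ a b, @Sym2.eq_swap _ c d],
      show ({s(b,c), s(a,d)} : Set (Sym2 V)) = {s(a,d), s(b,c)} from Set.pair_comm _ _]

lemma swapGraph_rot2 (H : SimpleGraph V) (a b c d : V) :
    swapGraph H a b c d = swapGraph H c d a b := by
  unfold swapGraph
  rw [show ({s(a,b), s(c,d)} : Set (Sym2 V)) = {s(c,d), s(a,b)} from Set.pair_comm _ _,
      show ({s(b,c), s(a,d)} : Set (Sym2 V)) = {s(d,a), s(c,b)} by
        rw [@Sym2.eq_swap _ d a, @Sym2.eq_swap _ c b, Set.pair_comm]]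

namespace SwapData

variable {H : SimpleGraph V} {a b c d : V}

lemma edgeSet_swapGraph (h : SwapData H a b c d) :
    (swapGraph H a b c d).edgeSet = (H.edgeSet \ {s(a,b), s(c,d)}) ∪ {s(b,c), s(a,d)} := by
  rw [swapGraph, edgeSet_fromEdgeSet]
  apply sdiff_eq_self_iff_disjoint.mpr
  rw [Set.disjoint_left]
  rintro e hdiag hmem
  rcases hmem with ⟨he, -⟩ | he
  · exact (SimpleGraph.not_isDiag_of_mem_edgeSet H he) hdiag
  · rcases he with rfl | he
    · exact h.hbc' (Sym2.mk_isDiag_iff.mp hdiag)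
    · rcases he with rfl
      exact h.had' (Sym2.mk_isDiag_iff.mp hdiag)

lemma swap_adj (h : SwapData H a b c d) {u v' : V} :
    (swapGraph H a b c d).Adj u v' ↔
      s(u,v') ∈ (H.edgeSet \ {s(a,b), s(c,d)}) ∪ {s(b,c), s(a,d)} := by
  rw [← SimpleGraph.mem_edgeSet, h.edgeSet_swapGraph]

lemma nbr_a (h : SwapData H a b c d) :
    (swapGraph H a b c d).neighborSet a = insert d (H.neighborSet a \ {b}) := by
  have hab := h.hab.ne
  ext y
  simp only [mem_neighborSet, h.swap_adj, Set.mem_union, Set.mem_diff,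
    SimpleGraph.mem_edgeSet, Set.mem_insert_iff, Set.mem_singleton_iff]
  constructor
  · rintro (⟨hAdj, hne⟩ | h')
    · right
      refine ⟨hAdj, ?_⟩
      rintro rfl
      exact hne (Or.inl rfl)
    · rcases h' with h' | h' <;> rw [Sym2.eq_iff] at h'
      · rcases h' with ⟨rfl, rfl⟩ | ⟨rfl, rfl⟩
        · exact absurd rfl hab
        · exact absurd rfl h.hac
      · rcases h' with ⟨-, rfl⟩ | ⟨rfl, rfl⟩
        · exact Or.inl rfl
        · exact absurd rfl h.had'
  · rintro (rfl | ⟨hAdj, hne⟩)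
    · exact Or.inr (Or.inr (by rw [Sym2.eq_iff]; exact Or.inl ⟨rfl, rfl⟩))
    · left
      refine ⟨hAdj, ?_⟩
      rintro (h' | h') <;> rw [Sym2.eq_iff] at h'
      · rcases h' with ⟨-, rfl⟩ | ⟨rfl, -⟩
        · exact hne rfl
        · exact hab rfl
      · rcases h' with ⟨rfl, -⟩ | ⟨rfl, rfl⟩
        · exact h.hac rfl
        · exact h.had' rfl

lemma nbr_other (h : SwapData H a b c d) {z : V}
    (hza : z ≠ a) (hzb : z ≠ b) (hzc : z ≠ c) (hzd : z ≠ d) :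
    (swapGraph H a b c d).neighborSet z = H.neighborSet z := by
  ext y
  simp only [mem_neighborSet, h.swap_adj, Set.mem_union, Set.mem_diff,
    SimpleGraph.mem_edgeSet, Set.mem_insert_iff, Set.mem_singleton_iff]
  constructor
  · rintro (⟨hAdj, -⟩ | h')
    · exact hAdj
    · rcases h' with h' | h' <;> rw [Sym2.eq_iff] at h' <;>
        rcases h' with ⟨rfl, -⟩ | ⟨rfl, -⟩ <;>
        first
          | exact absurd rfl hza
          | exact absurd rfl hzb
          | exact absurd rfl hzc
          | exact absurd rfl hzd
  · intro hAdj
    left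
    refine ⟨hAdj, ?_⟩
    rintro (h' | h') <;> rw [Sym2.eq_iff] at h' <;>
      rcases h' with ⟨rfl, -⟩ | ⟨rfl, -⟩ <;>
      first
        | exact hza rfl
        | exact hzb rfl
        | exact hzc rfl
        | exact hzd rfl

end SwapData
end SwapTheory

section SwapTheory2
variable {V : Type*}

namespace SwapData

variable {H : SimpleGraph V} {a b c d : V}

lemma ncard_nbr_inter_self [Fintype V] (h : SwapData H a b c d) {A : Set V}
    (hbA : b ∈ A) (hdA : d ∈ A) :
    ((swapGraph H a b c d).neighborSet a ∩ A).ncard = (H.neighborSet a ∩ A).ncard := by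
  have hins : (swapGraph H a b c d).neighborSet a ∩ A
      = insert d ((H.neighborSet a ∩ A) \ {b}) := by
    rw [h.nbr_a]
    ext y
    simp only [Set.mem_inter_iff, Set.mem_insert_iff, Set.mem_diff, Set.mem_singleton_iff]
    constructor
    · rintro ⟨rfl | ⟨hy, hyb⟩, hyA⟩
      · exact Or.inl rfl
      · exact Or.inr ⟨⟨hy, hyA⟩, hyb⟩
    · rintro (rfl | ⟨⟨hy, hyA⟩, hyb⟩)
      · exact ⟨Or.inl rfl, hdA⟩
      · exact ⟨Or.inr ⟨hy, hyb⟩, hyA⟩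
  rw [hins]
  have hbmem : b ∈ H.neighborSet a ∩ A := ⟨h.hab, hbA⟩
  have hdnot : d ∉ (H.neighborSet a ∩ A) \ {b} := by
    rintro ⟨⟨hd, -⟩, -⟩
    exact h.had hd
  have hfin : (H.neighborSet a ∩ A).Finite := Set.toFinite _
  have hpos : 1 ≤ (H.neighborSet a ∩ A).ncard :=
    (Set.ncard_pos hfin).mpr ⟨b, hbmem⟩
  rw [Set.ncard_insert_of_notMem hdnot (hfin.diff),
      Set.ncard_diff_singleton_of_mem hbmem]
  omega

lemma ncard_nbr_inter [Fintype V] (h : SwapData H a b c d) {A : Set V}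
    (haA : a ∈ A) (hbA : b ∈ A) (hcA : c ∈ A) (hdA : d ∈ A) (z : V) :
    ((swapGraph H a b c d).neighborSet z ∩ A).ncard = (H.neighborSet z ∩ A).ncard := by
  by_cases hza : z = a
  · subst hza; exact h.ncard_nbr_inter_self hbA hdA
  by_cases hzb : z = b
  · subst hzb
    rw [swapGraph_rot1]
    exact h.rot1.ncard_nbr_inter_self haA hcA
  by_cases hzc : z = c
  · subst hzc
    rw [swapGraph_rot2]
    exact h.rot2.ncard_nbr_inter_self hdA hbA
  by_cases hzd : z = d
  · subst hzd
    rw [swapGraph_rot2, swapGraph_rot1]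
    exact h.rot2.rot1.ncard_nbr_inter_self hcA haA
  · rw [h.nbr_other hza hzb hzc hzd]

lemma gdeg_swap [Fintype V] (h : SwapData H a b c d) (z : V) :
    gdeg (swapGraph H a b c d) z = gdeg H z := by
  have := h.ncard_nbr_inter (A := Set.univ) trivial trivial trivial trivial z
  simpa [gdeg, Set.inter_univ] using this

lemma adj_outside (h : SwapData H a b c d) {A : Set V}
    (haA : a ∈ A) (hbA : b ∈ A) (hcA : c ∈ A) (hdA : d ∈ A) {u w : V}
    (hout : u ∉ A ∨ w ∉ A) :
    ((swapGraph H a b c d).Adj u w ↔ H.Adj u w) := by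
  have key : ∀ p q : V, p ∈ A → q ∈ A → s(u,w) ≠ s(p,q) := by
    intro p q hp hq hEq
    rw [Sym2.eq_iff] at hEq
    rcases hEq with ⟨rfl, rfl⟩ | ⟨rfl, rfl⟩ <;> tauto
  rw [h.swap_adj]
  simp only [Set.mem_union, Set.mem_diff, SimpleGraph.mem_edgeSet,
    Set.mem_insert_iff, Set.mem_singleton_iff]
  constructor
  · rintro (⟨hAdj, -⟩ | (h' | h'))
    · exact hAdj
    · exact absurd h' (key b c hbA hcA)
    · exact absurd h' (key a d haA hdA)
  · intro hAdj
    left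
    refine ⟨hAdj, ?_⟩
    rintro (h' | h')
    · exact key a b haA hbA h'
    · exact key c d hcA hdA h'

lemma crossCount_swap [Fintype V] (h : SwapData H a b c d) {U W : Set V}
    (hUW : Disjoint U W) (haU : a ∈ U) (hbU : b ∈ U) (hcU : c ∈ U) (hdU : d ∈ U) :
    crossCount U W (swapGraph H a b c d) = crossCount U W H := by
  have key : ∀ p q u w : V, p ∈ U → q ∈ U → u ∈ U → w ∈ W → s(u,w) ≠ s(p,q) := by
    intro p q u w hp hq hu hw hEq
    rw [Sym2.eq_iff] at hEq
    rcases hEq with ⟨rfl, rfl⟩ | ⟨rfl, rfl⟩ <;>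
      exact (Set.disjoint_left.mp hUW (by assumption) hw).elim
  unfold crossCount
  congr 1
  ext e
  simp only [Set.mem_setOf_eq]
  constructor
  · rintro ⟨hmem, u, hu, w, hw, rfl⟩
    refine ⟨?_, u, hu, w, hw, rfl⟩
    rw [h.edgeSet_swapGraph] at hmem
    rcases hmem with ⟨hmem, -⟩ | (h' | h')
    · exact hmem
    · exact absurd h' (key b c u w hbU hcU hu hw)
    · exact absurd h' (key a d u w haU hdU hu hw)
  · rintro ⟨hmem, u, hu, w, hw, rfl⟩
    refine ⟨?_, u, hu, w, hw, rfl⟩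
    rw [h.edgeSet_swapGraph]
    left
    refine ⟨hmem, ?_⟩
    rintro (h' | h')
    · exact key a b u w haU hbU hu hw h'
    · exact key c d u w hcU hdU hu hw h'

lemma isSwapWithin (h : SwapData H a b c d) {A : Set V}
    (haA : a ∈ A) (hbA : b ∈ A) (hcA : c ∈ A) (hdA : d ∈ A) :
    IsSwapWithin A H (swapGraph H a b c d) :=
  ⟨a, b, c, d, haA, hbA, hcA, hdA, h.hab.ne, h.hac, h.had', h.hbc', h.hbd, h.hcd.ne,
   h.hab, h.hcd, h.hbc, h.had, h.edgeSet_swapGraph⟩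

end SwapData

lemma IsSwapWithin.exists_swapData {A : Set V} {H H' : SimpleGraph V}
    (h : IsSwapWithin A H H') :
    ∃ a b c d : V, SwapData H a b c d ∧ a ∈ A ∧ b ∈ A ∧ c ∈ A ∧ d ∈ A ∧
      H' = swapGraph H a b c d := by
  obtain ⟨a, b, c, d, haA, hbA, hcA, hdA, hab, hac, had, hbc, hbd, hcd,
    hAab, hAcd, hnbc, hnad, hE⟩ := h
  have hsd : SwapData H a b c d := ⟨hAab, hAcd, hnbc, hnad, hac, hbd, hbc, had⟩
  exact ⟨a, b, c, d, hsd, haA, hbA, hcA, hdA,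
    SimpleGraph.edgeSet_inj.mp (hE.trans hsd.edgeSet_swapGraph.symm)⟩

lemma IsSwapWithin.gdeg_eq [Fintype V] {A : Set V} {H H' : SimpleGraph V}
    (h : IsSwapWithin A H H') (z : V) : gdeg H' z = gdeg H z := by
  obtain ⟨a, b, c, d, hsd, -, -, -, -, rfl⟩ := h.exists_swapData
  exact hsd.gdeg_swap z

lemma IsSwapWithin.crossCount_eq [Fintype V] {U W : Set V} {H H' : SimpleGraph V}
    (h : IsSwapWithin U H H') (hUW : Disjoint U W) :
    crossCount U W H' = crossCount U W H := by
  obtain ⟨a, b, c, d, hsd, haU, hbU, hcU, hdU, rfl⟩ := h.exists_swapData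
  exact hsd.crossCount_swap hUW haU hbU hcU hdU

lemma IsSwapWithin.mono {A B : Set V} {H H' : SimpleGraph V}
    (hAB : A ⊆ B) (h : IsSwapWithin A H H') : IsSwapWithin B H H' := by
  obtain ⟨a, b, c, d, haA, hbA, hcA, hdA, rest⟩ := h
  exact ⟨a, b, c, d, hAB haA, hAB hbA, hAB hcA, hAB hdA, rest⟩

end SwapTheory2

section ChainTheory
variable {V : Type*}

/-- There is a sequence of swaps within `A` from `H` to `K`. -/
def SwapChain (A : Set V) (H K : SimpleGraph V) : Prop :=
  ∃ (t : ℕ) (f : ℕ → SimpleGraph V), f 0 = H ∧ f t = K ∧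
    ∀ i < t, IsSwapWithin A (f i) (f (i + 1))

lemma SwapChain.refl (A : Set V) (H : SimpleGraph V) : SwapChain A H H :=
  ⟨0, fun _ => H, rfl, rfl, fun i hi => absurd hi (Nat.not_lt_zero i)⟩

lemma SwapChain.single {A : Set V} {H K : SimpleGraph V}
    (h : IsSwapWithin A H K) : SwapChain A H K := by
  refine ⟨1, fun i => if i = 0 then H else K, by simp, by simp, ?_⟩
  intro i hi
  interval_cases i
  simpa using h

lemma SwapChain.trans {A : Set V} {H K L : SimpleGraph V}
    (h1 : SwapChain A H K) (h2 : SwapChain A K L) : SwapChain A H L := by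
  obtain ⟨t1, f1, hf10, hf1t, hswap1⟩ := h1
  obtain ⟨t2, f2, hf20, hf2t, hswap2⟩ := h2
  refine ⟨t1 + t2, fun i => if i < t1 then f1 i else f2 (i - t1), ?_, ?_, ?_⟩
  · show (if 0 < t1 then f1 0 else f2 (0 - t1)) = H
    by_cases h : 0 < t1
    · rw [if_pos h, hf10]
    · rw [if_neg h, Nat.zero_sub, hf20, ← hf1t, show t1 = 0 by omega, hf10]
  · show (if t1 + t2 < t1 then f1 (t1 + t2) else f2 (t1 + t2 - t1)) = L
    rw [if_neg (by omega), show t1 + t2 - t1 = t2 by omega, hf2t]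
  · intro i hi
    show IsSwapWithin A (if i < t1 then f1 i else f2 (i - t1))
      (if i + 1 < t1 then f1 (i + 1) else f2 (i + 1 - t1))
    by_cases h1i : i < t1
    · rw [if_pos h1i]
      by_cases h2i : i + 1 < t1
      · rw [if_pos h2i]
        exact hswap1 i h1i
      · rw [if_neg h2i, show i + 1 - t1 = 0 by omega, hf20, ← hf1t,
          show t1 = i + 1 by omega]
        exact hswap1 i h1i
    · rw [if_neg h1i, if_neg (by omega), show i + 1 - t1 = (i - t1) + 1 by omega]
      exact hswap2 (i - t1) (by omega)

lemma IsSwapWithin.inv {A : Set V} {H H' : SimpleGraph V}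
    (h : IsSwapWithin A H H') : IsSwapWithin A H' H := by
  obtain ⟨a, b, c, d, hsd, haA, hbA, hcA, hdA, rfl⟩ := h.exists_swapData
  have hab := hsd.hab.ne
  have hcd := hsd.hcd.ne
  have d1 : s(a, b) ≠ s(b, c) := by
    intro hEq; rw [Sym2.eq_iff] at hEq
    rcases hEq with ⟨h1, h2⟩ | ⟨h1, h2⟩
    · exact hsd.hab.ne h1
    · exact hsd.hac h1
  have d2 : s(a, b) ≠ s(a, d) := by
    intro hEq; rw [Sym2.eq_iff] at hEq
    rcases hEq with ⟨h1, h2⟩ | ⟨h1, h2⟩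
    · exact hsd.hbd h2
    · exact hsd.had' h1
  have d3 : s(c, d) ≠ s(b, c) := by
    intro hEq; rw [Sym2.eq_iff] at hEq
    rcases hEq with ⟨h1, h2⟩ | ⟨h1, h2⟩
    · exact hsd.hbc' h1.symm
    · exact hsd.hbd h2.symm
  have d4 : s(c, d) ≠ s(a, d) := by
    intro hEq; rw [Sym2.eq_iff] at hEq
    rcases hEq with ⟨h1, h2⟩ | ⟨h1, h2⟩
    · exact hsd.hac h1.symm
    · exact hsd.hcd.ne h1
  refine ⟨b, c, d, a, hbA, hcA, hdA, haA,
    hsd.hbc', hsd.hbd, hab.symm, hcd, hsd.hac.symm, hsd.had'.symm,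
    ?_, ?_, ?_, ?_, ?_⟩
  · rw [hsd.swap_adj]
    exact Or.inr (Or.inl rfl)
  · rw [hsd.swap_adj]
    right; right
    rw [Set.mem_singleton_iff, Sym2.eq_iff]
    exact Or.inr ⟨rfl, rfl⟩
  · rw [hsd.swap_adj]
    rintro (⟨hmem, hne⟩ | hmem)
    · exact hne (Or.inr rfl)
    · rcases hmem with hmem | hmem
      · exact d3 hmem
      · rw [Set.mem_singleton_iff] at hmem
        exact d4 hmem
  · rw [hsd.swap_adj]
    have e1 : s(b, a) = s(a, b) := Sym2.eq_swap
    rw [e1]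
    rintro (⟨hmem, hne⟩ | hmem)
    · exact hne (Or.inl rfl)
    · rcases hmem with hmem | hmem
      · exact d1 hmem
      · rw [Set.mem_singleton_iff] at hmem
        exact d2 hmem
  · -- H.edgeSet = ((swapGraph H a b c d).edgeSet \ {s(b,c), s(d,a)}) ∪ {s(c,d), s(b,a)}
    rw [hsd.edgeSet_swapGraph]
    have e1 : s(b, a) = s(a, b) := Sym2.eq_swap
    have e2 : s(d, a) = s(a, d) := Sym2.eq_swap
    have mab : s(a, b) ∈ H.edgeSet := hsd.hab
    have mcd : s(c, d) ∈ H.edgeSet := hsd.hcd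
    have mbc : s(b, c) ∉ H.edgeSet := hsd.hbc
    have mad : s(a, d) ∉ H.edgeSet := hsd.had
    ext e
    simp only [Set.mem_union, Set.mem_diff, Set.mem_insert_iff, Set.mem_singleton_iff, e1, e2]
    constructor
    · intro he
      by_cases h1 : e = s(a, b)
      · exact Or.inr (Or.inr h1)
      by_cases h2 : e = s(c, d)
      · exact Or.inr (Or.inl h2)
      · refine Or.inl ⟨Or.inl ⟨he, ?_⟩, ?_⟩
        · rintro (rfl | rfl)
          · exact h1 rfl
          · exact h2 rfl
        · rintro (rfl | rfl)
          · exact mbc he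
          · exact mad he
    · rintro (⟨(⟨he, -⟩ | (rfl | rfl)), hne⟩ | (rfl | rfl))
      · exact he
      · exact absurd (Or.inl rfl) hne
      · exact absurd (Or.inr rfl) hne
      · exact mcd
      · exact mab

lemma SwapChain.symm {A : Set V} {H K : SimpleGraph V}
    (h : SwapChain A H K) : SwapChain A K H := by
  obtain ⟨t, f, hf0, hft, hswap⟩ := h
  refine ⟨t, fun i => f (t - i), ?_, ?_, ?_⟩
  · show f (t - 0) = K
    rw [Nat.sub_zero, hft]
  · show f (t - t) = H
    rw [Nat.sub_self, hf0]
  · intro i hi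
    show IsSwapWithin A (f (t - i)) (f (t - (i + 1)))
    rw [show t - i = (t - (i + 1)) + 1 by omega]
    exact (hswap (t - (i + 1)) (by omega)).inv

lemma SwapChain.mono {A B : Set V} {H K : SimpleGraph V}
    (hAB : A ⊆ B) (h : SwapChain A H K) : SwapChain B H K := by
  obtain ⟨t, f, hf0, hft, hswap⟩ := h
  exact ⟨t, f, hf0, hft, fun i hi => (hswap i hi).mono hAB⟩

end ChainTheory

section Exchange
variable {V : Type*}

lemma exchange_exists [Fintype V] {A : Set V} {H : SimpleGraph V} {v w x : V}
    (hvA : v ∈ A) (hwA : w ∈ A) (hxA : x ∈ A)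
    (hvw : H.Adj v w) (hvx : ¬ H.Adj v x) (hxv : x ≠ v)
    (hdeg : (H.neighborSet w ∩ A).ncard ≤ (H.neighborSet x ∩ A).ncard) :
    ∃ y, y ∈ A ∧ y ≠ v ∧ y ≠ w ∧ y ≠ x ∧ H.Adj x y ∧ ¬ H.Adj w y := by
  by_contra hcon
  push_neg at hcon
  have hsub : (H.neighborSet x ∩ A) \ {w} ⊆ (H.neighborSet w ∩ A) \ {v, x} := by
    rintro y ⟨⟨hy, hyA⟩, hyw⟩
    rw [SimpleGraph.mem_neighborSet] at hy
    rw [Set.mem_singleton_iff] at hyw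
    have hyx : y ≠ x := fun h => H.irrefl (h ▸ hy)
    have hyv : y ≠ v := by rintro rfl; exact hvx hy.symm
    have hAdjwy := hcon y hyA hyv hyw hyx hy
    refine ⟨⟨hAdjwy, hyA⟩, ?_⟩
    simp [Set.mem_insert_iff, hyv, hyx]
  have hvmem : v ∈ H.neighborSet w ∩ A := ⟨hvw.symm, hvA⟩
  have hfinx : (H.neighborSet x ∩ A).Finite := Set.toFinite _
  have hfinw : (H.neighborSet w ∩ A).Finite := Set.toFinite _
  have hdd : (H.neighborSet w ∩ A) \ {v, x} = ((H.neighborSet w ∩ A) \ {v}) \ {x} := by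
    ext z; simp only [Set.mem_diff, Set.mem_insert_iff, Set.mem_singleton_iff]; tauto
  by_cases hxw : H.Adj x w
  · have hwmem : w ∈ H.neighborSet x ∩ A := ⟨hxw, hwA⟩
    have hxmem : x ∈ (H.neighborSet w ∩ A) \ {v} := ⟨⟨hxw.symm, hxA⟩, hxv⟩
    have hle := Set.ncard_le_ncard hsub (hfinw.diff)
    rw [Set.ncard_diff_singleton_of_mem hwmem, hdd,
      Set.ncard_diff_singleton_of_mem hxmem,
      Set.ncard_diff_singleton_of_mem hvmem] at hle
    have h2 : 2 ≤ (H.neighborSet w ∩ A).ncard := by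
      have hsub2 : ({v, x} : Set V) ⊆ H.neighborSet w ∩ A := by
        rintro z (rfl | hz)
        · exact hvmem
        · rw [Set.mem_singleton_iff] at hz; subst hz; exact hxmem.1
      have := Set.ncard_le_ncard hsub2 hfinw
      rwa [Set.ncard_pair (fun h => hxv h.symm)] at this
    have h1 : 1 ≤ (H.neighborSet x ∩ A).ncard := (Set.ncard_pos hfinx).mpr ⟨w, hwmem⟩
    omega
  · have hwnot : w ∉ H.neighborSet x ∩ A := fun h => hxw h.1
    rw [Set.diff_singleton_eq_self hwnot] at hsub
    have hsub2 : (H.neighborSet x ∩ A) ⊆ (H.neighborSet w ∩ A) \ {v} := by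
      intro z hz
      have := hsub hz
      rw [hdd] at this
      exact this.1
    have hle := Set.ncard_le_ncard hsub2 (hfinw.diff)
    rw [Set.ncard_diff_singleton_of_mem hvmem] at hle
    have h1 : 1 ≤ (H.neighborSet w ∩ A).ncard := (Set.ncard_pos hfinw).mpr ⟨v, hvmem⟩
    omega

lemma exists_topset {α : Type*} (f : α → ℕ) :
    ∀ (n : ℕ) (s : Set α), s.Finite → n ≤ s.ncard →
    ∃ T : Set α, T ⊆ s ∧ T.ncard = n ∧ ∀ x ∈ T, ∀ w ∈ s \ T, f w ≤ f x := by
  intro n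
  induction n with
  | zero =>
    exact fun s hs _ => ⟨∅, Set.empty_subset s, Set.ncard_empty _, by simp⟩
  | succ n ih =>
    intro s hs hn
    obtain ⟨T, hTs, hTn, hTmax⟩ := ih s hs (by omega)
    have hne : (s \ T).Nonempty := by
      rw [Set.nonempty_iff_ne_empty]
      intro hemp
      rw [Set.diff_eq_empty] at hemp
      have : s = T := Set.eq_of_subset_of_ncard_le hemp (by omega) (hs.subset hTs)
      rw [← this] at hTn
      omega
    obtain ⟨m, hm, hmax⟩ := Set.exists_max_image (s \ T) f (hs.diff) hne
    refine ⟨insert m T, Set.insert_subset hm.1 hTs, ?_, ?_⟩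
    · rw [Set.ncard_insert_of_notMem hm.2 (hs.subset hTs), hTn]
    · rintro x (rfl | hxT) w hw
      · exact hmax w ⟨hw.1, fun h => hw.2 (Set.mem_insert_of_mem _ h)⟩
      · exact hTmax x hxT w ⟨hw.1, fun h => hw.2 (Set.mem_insert_of_mem _ h)⟩

end Exchange

section Steer
variable {V : Type*}

lemma steer [Fintype V] {A : Set V} {v : V} (hvA : v ∈ A) (T : Set V)
    (hTA : T ⊆ A) (hTv : v ∉ T) :
    ∀ (m : ℕ) (H : SimpleGraph V),
      (symmDiff (H.neighborSet v ∩ A) T).ncard ≤ m →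
      (H.neighborSet v ∩ A).ncard = T.ncard →
      (∀ x ∈ T, ∀ w ∈ (A \ {v}) \ T,
        (H.neighborSet w ∩ A).ncard ≤ (H.neighborSet x ∩ A).ncard) →
      ∃ H' : SimpleGraph V, SwapChain A H H' ∧
        H'.neighborSet v ∩ A = T ∧
        (∀ z, (H'.neighborSet z ∩ A).ncard = (H.neighborSet z ∩ A).ncard) ∧
        (∀ z, gdeg H' z = gdeg H z) ∧
        (∀ u w : V, (u ∉ A ∨ w ∉ A) → (H'.Adj u w ↔ H.Adj u w)) := by
  intro m
  induction m with
  | zero =>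
    intro H hm hcard _
    have hz : (symmDiff (H.neighborSet v ∩ A) T).ncard = 0 := by omega
    rw [Set.ncard_eq_zero (Set.toFinite _), ← Set.bot_eq_empty, symmDiff_eq_bot] at hz
    exact ⟨H, SwapChain.refl A H, hz, fun _ => rfl, fun _ => rfl, fun _ _ _ => Iff.rfl⟩
  | succ m ih =>
    intro H hm hcard hP
    by_cases hST : H.neighborSet v ∩ A = T
    · exact ⟨H, SwapChain.refl A H, hST, fun _ => rfl, fun _ => rfl, fun _ _ _ => Iff.rfl⟩
    have hfinS : (H.neighborSet v ∩ A).Finite := Set.toFinite _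
    have hfinT : T.Finite := Set.toFinite _
    have hwex : ((H.neighborSet v ∩ A) \ T).Nonempty := by
      rw [Set.nonempty_iff_ne_empty]
      intro hemp
      rw [Set.diff_eq_empty] at hemp
      exact hST (Set.eq_of_subset_of_ncard_le hemp (le_of_eq hcard.symm) hfinT)
    have hxex : (T \ (H.neighborSet v ∩ A)).Nonempty := by
      rw [Set.nonempty_iff_ne_empty]
      intro hemp
      rw [Set.diff_eq_empty] at hemp
      exact hST (Set.eq_of_subset_of_ncard_le hemp (le_of_eq hcard) hfinS).symm
    obtain ⟨w, hwS, hwT⟩ := hwex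
    obtain ⟨x, hxT, hxS⟩ := hxex
    have hAdjvw : H.Adj v w := hwS.1
    have hwA : w ∈ A := hwS.2
    have hxA : x ∈ A := hTA hxT
    have hxv : x ≠ v := fun h => hTv (h ▸ hxT)
    have hnvx : ¬ H.Adj v x := fun h => hxS ⟨h, hxA⟩
    have hwv : w ≠ v := hAdjvw.ne'
    have hxw : x ≠ w := fun h => hwT (h ▸ hxT)
    have hdeg : (H.neighborSet w ∩ A).ncard ≤ (H.neighborSet x ∩ A).ncard :=
      hP x hxT w ⟨⟨hwA, hwv⟩, hwT⟩
    obtain ⟨y, hyA, hyv, hyw, hyx, hAdjxy, hnwy⟩ :=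
      exchange_exists hvA hwA hxA hAdjvw hnvx hxv hdeg
    have hsd : SwapData H w v x y :=
      ⟨hAdjvw.symm, hAdjxy, hnvx, hnwy, hxw.symm, hyv.symm, hxv.symm, hyw.symm⟩
    have hswap : IsSwapWithin A H (swapGraph H w v x y) := hsd.isSwapWithin hwA hvA hxA hyA
    have hnbrv : (swapGraph H w v x y).neighborSet v
        = insert x (H.neighborSet v \ {w}) := by
      rw [swapGraph_rot1]
      exact hsd.rot1.nbr_a
    have hSv : (swapGraph H w v x y).neighborSet v ∩ A
        = insert x ((H.neighborSet v ∩ A) \ {w}) := by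
      rw [hnbrv]
      ext z
      simp only [Set.mem_inter_iff, Set.mem_insert_iff, Set.mem_diff, Set.mem_singleton_iff]
      constructor
      · rintro ⟨rfl | ⟨hz, hzw⟩, hzA⟩
        · exact Or.inl rfl
        · exact Or.inr ⟨⟨hz, hzA⟩, hzw⟩
      · rintro (rfl | ⟨⟨hz, hzA⟩, hzw⟩)
        · exact ⟨Or.inl rfl, hxA⟩
        · exact ⟨Or.inr ⟨hz, hzw⟩, hzA⟩
    have hsymmd : symmDiff ((swapGraph H w v x y).neighborSet v ∩ A) T
        = (symmDiff (H.neighborSet v ∩ A) T) \ {w, x} := by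
      rw [hSv]
      ext z
      by_cases hzx : z = x
      · subst hzx
        simp [Set.mem_symmDiff, Set.mem_diff, Set.mem_insert_iff, hxT]
      by_cases hzw : z = w
      · subst hzw
        simp [Set.mem_symmDiff, Set.mem_diff, Set.mem_insert_iff, Set.mem_singleton_iff,
          hwT, hzx, hxw.symm]
      · simp only [Set.mem_symmDiff, Set.mem_insert_iff, Set.mem_diff,
          Set.mem_singleton_iff, hzx, hzw, false_or, or_false, not_false_iff, and_true]
    have hwmem : w ∈ symmDiff (H.neighborSet v ∩ A) T :=
      Set.mem_symmDiff.mpr (Or.inl ⟨hwS, hwT⟩)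
    have hmeas : (symmDiff ((swapGraph H w v x y).neighborSet v ∩ A) T).ncard ≤ m := by
      rw [hsymmd]
      have hsub : (symmDiff (H.neighborSet v ∩ A) T) \ {w, x}
          ⊆ (symmDiff (H.neighborSet v ∩ A) T) \ {w} := by
        apply Set.diff_subset_diff_right
        intro z hz
        rw [Set.mem_singleton_iff] at hz
        exact Or.inl hz
      have hle := Set.ncard_le_ncard hsub ((Set.toFinite _).diff)
      rw [Set.ncard_diff_singleton_of_mem hwmem] at hle
      omega
    have hdApres := fun z => hsd.ncard_nbr_inter hwA hvA hxA hyA z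
    have hcard1 : ((swapGraph H w v x y).neighborSet v ∩ A).ncard = T.ncard := by
      rw [hdApres v]; exact hcard
    have hP1 : ∀ x' ∈ T, ∀ w' ∈ (A \ {v}) \ T,
        ((swapGraph H w v x y).neighborSet w' ∩ A).ncard
          ≤ ((swapGraph H w v x y).neighborSet x' ∩ A).ncard := by
      intro x' hx' w' hw'
      rw [hdApres x', hdApres w']
      exact hP x' hx' w' hw'
    obtain ⟨H', chain', hT', hdA', hgdeg', hadj'⟩ :=
      ih (swapGraph H w v x y) hmeas hcard1 hP1
    refine ⟨H', (SwapChain.single hswap).trans chain', hT',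
      fun z => (hdA' z).trans (hdApres z),
      fun z => (hgdeg' z).trans (hsd.gdeg_swap z),
      fun u w' hout => (hadj' u w' hout).trans (hsd.adj_outside hwA hvA hxA hyA hout)⟩

end Steer

section Conn
variable {V : Type*}

lemma conn [Fintype V] :
    ∀ (n : ℕ) (A : Set V), A.ncard ≤ n → ∀ H K : SimpleGraph V,
      (∀ z, gdeg H z = gdeg K z) →
      (∀ u w : V, (u ∉ A ∨ w ∉ A) → (H.Adj u w ↔ K.Adj u w)) →
      SwapChain A H K := by
  intro n
  induction n with
  | zero =>
    intro A hA H K _ hagree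
    have hAe : A = ∅ := by
      rw [← Set.ncard_eq_zero (Set.toFinite A)]
      omega
    have : H = K := by
      ext u w
      exact hagree u w (Or.inl (by rw [hAe]; exact Set.notMem_empty u))
    rw [this]
    exact SwapChain.refl A K
  | succ n ih =>
    intro A hA H K hdeg hagree
    by_cases hHK : H = K
    · rw [hHK]; exact SwapChain.refl A K
    have hdiffex : ∃ u w, ¬ (H.Adj u w ↔ K.Adj u w) := by
      by_contra hc
      push_neg at hc
      exact hHK (by ext u w; exact hc u w)
    obtain ⟨u0, w0, hdiff⟩ := hdiffex
    have hvA : u0 ∈ A := by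
      by_contra h
      exact hdiff (hagree _ _ (Or.inl h))
    have hdAeq : ∀ z, (H.neighborSet z ∩ A).ncard = (K.neighborSet z ∩ A).ncard := by
      intro z
      have hdiffset : H.neighborSet z \ A = K.neighborSet z \ A := by
        ext y
        simp only [Set.mem_diff, SimpleGraph.mem_neighborSet]
        constructor
        · rintro ⟨hy, hyA⟩
          exact ⟨(hagree z y (Or.inr hyA)).mp hy, hyA⟩
        · rintro ⟨hy, hyA⟩
          exact ⟨(hagree z y (Or.inr hyA)).mpr hy, hyA⟩
      have h1 := Set.ncard_inter_add_ncard_diff_eq_ncard (H.neighborSet z) A (Set.toFinite _)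
      have h2 := Set.ncard_inter_add_ncard_diff_eq_ncard (K.neighborSet z) A (Set.toFinite _)
      have h3 : gdeg H z = gdeg K z := hdeg z
      unfold gdeg at h3
      rw [hdiffset] at h1
      omega
    have hsubn : (H.neighborSet u0 ∩ A).ncard ≤ (A \ {u0}).ncard := by
      apply Set.ncard_le_ncard _ ((Set.toFinite A).diff)
      rintro y ⟨hy, hyA⟩
      exact ⟨hyA, fun h => H.irrefl (h ▸ hy : H.Adj u0 u0)⟩
    obtain ⟨T, hTsub, hTcard, hTmax⟩ :=
      exists_topset (fun z => (H.neighborSet z ∩ A).ncard)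
        ((H.neighborSet u0 ∩ A).ncard) (A \ {u0}) ((Set.toFinite A).diff) hsubn
    have hTA : T ⊆ A := hTsub.trans Set.diff_subset
    have hTv : u0 ∉ T := fun h => (hTsub h).2 rfl
    obtain ⟨H1, chainH, hHv, hHdA, hHgdeg, hHadj⟩ :=
      steer hvA T hTA hTv (symmDiff (H.neighborSet u0 ∩ A) T).ncard H le_rfl
        hTcard.symm hTmax
    have hKcard : (K.neighborSet u0 ∩ A).ncard = T.ncard := by
      rw [← hdAeq u0, ← hTcard]
    have hKmax : ∀ x ∈ T, ∀ w ∈ (A \ {u0}) \ T,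
        (K.neighborSet w ∩ A).ncard ≤ (K.neighborSet x ∩ A).ncard := by
      intro x hx w hw
      rw [← hdAeq x, ← hdAeq w]
      exact hTmax x hx w hw
    obtain ⟨K1, chainK, hKv, hKdA, hKgdeg, hKadj⟩ :=
      steer hvA T hTA hTv (symmDiff (K.neighborSet u0 ∩ A) T).ncard K le_rfl
        hKcard hKmax
    have hA' : (A \ {u0}).ncard ≤ n := by
      have h1 := Set.ncard_diff_singleton_of_mem hvA
      have h2 : 0 < A.ncard := (Set.ncard_pos (Set.toFinite A)).mpr ⟨u0, hvA⟩
      omega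
    have hgdeg1 : ∀ z, gdeg H1 z = gdeg K1 z :=
      fun z => (hHgdeg z).trans ((hdeg z).trans (hKgdeg z).symm)
    have hagree1 : ∀ u w : V, (u ∉ A \ {u0} ∨ w ∉ A \ {u0}) → (H1.Adj u w ↔ K1.Adj u w) := by
      have hat : ∀ yy : V, yy ∈ A → (H1.Adj u0 yy ↔ K1.Adj u0 yy) := by
        intro yy hyy
        constructor
        · intro h
          have : yy ∈ H1.neighborSet u0 ∩ A := ⟨h, hyy⟩
          rw [hHv] at this
          have : yy ∈ K1.neighborSet u0 ∩ A := by rw [hKv]; exact this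
          exact this.1
        · intro h
          have : yy ∈ K1.neighborSet u0 ∩ A := ⟨h, hyy⟩
          rw [hKv] at this
          have : yy ∈ H1.neighborSet u0 ∩ A := by rw [hHv]; exact this
          exact this.1
      intro u w hout
      by_cases houtA : u ∉ A ∨ w ∉ A
      · rw [hHadj u w houtA, hKadj u w houtA]
        exact hagree u w houtA
      · push_neg at houtA
        obtain ⟨huA, hwA⟩ := houtA
        have : u = u0 ∨ w = u0 := by
          rcases hout with hout | hout
          · left; by_contra h; exact hout ⟨huA, h⟩
          · right; by_contra h; exact hout ⟨hwA, h⟩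
        rcases this with rfl | rfl
        · exact hat w hwA
        · rw [SimpleGraph.adj_comm, SimpleGraph.adj_comm (G := K1)]
          exact hat u huA
    have hrec := ih (A \ {u0}) hA' H1 K1 hgdeg1 hagree1
    exact (chainH.trans (hrec.mono Set.diff_subset)).trans chainK.symm

end Conn

/-- If the symmetric difference of two realizations is a single alternating circuit lying
entirely inside the class `U`, then one can be transformed into the other by swaps whose four
vertices all lie in `U`; all intermediate graphs are realizations with the same number of
crossing edges. -/
theorem circuit_within_class_swaps {V : Type*} [Fintype V] (U W : Set V)
    (hUW : Disjoint U W) (hcov : U ∪ W = Set.univ) (d : V → ℕ)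
    (G G' : SimpleGraph V) (hG : IsRealization G d) (hG' : IsRealization G' d)
    (c : List V) (hc : IsAltCircuit G G' c) (hcU : ∀ v ∈ c, v ∈ U)
    (hsd : symmDiff G.edgeSet G'.edgeSet = circuitEdges c) :
    ∃ (t : ℕ) (f : ℕ → SimpleGraph V), f 0 = G ∧ f t = G' ∧
      (∀ i < t, IsSwapWithin U (f i) (f (i + 1))) ∧
      (∀ i ≤ t, IsRealization (f i) d ∧ crossCount U W (f i) = crossCount U W G) := by
  have hagree : ∀ u w : V, (u ∉ U ∨ w ∉ U) → (G.Adj u w ↔ G'.Adj u w) := by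
    intro u w hout
    by_contra hne
    have hmem : s(u, w) ∈ symmDiff G.edgeSet G'.edgeSet := by
      rw [Set.mem_symmDiff]
      simp only [SimpleGraph.mem_edgeSet]
      tauto
    rw [hsd] at hmem
    obtain ⟨i, hi⟩ := hmem
    unfold stepEdge at hi
    rw [Sym2.eq_iff] at hi
    have hmem1 : c.get i ∈ U := hcU _ (List.get_mem c i)
    have hmem2 : c.get ⟨(i.val + 1) % c.length, Nat.mod_lt _ i.pos⟩ ∈ U :=
      hcU _ (List.get_mem c _)
    rcases hi with ⟨h1, h2⟩ | ⟨h1, h2⟩ <;>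
      rcases hout with h | h
    · exact h (h1 ▸ hmem1)
    · exact h (h2 ▸ hmem2)
    · exact h (h2 ▸ hmem2)
    · exact h (h1 ▸ hmem1)
  have hgdeg : ∀ z, gdeg G z = gdeg G' z := fun z => (hG z).trans (hG' z).symm
  obtain ⟨t, f, hf0, hft, hswaps⟩ := conn U.ncard U le_rfl G G' hgdeg hagree
  refine ⟨t, f, hf0, hft, hswaps, ?_⟩
  have key : ∀ i, i ≤ t →
      IsRealization (f i) d ∧ crossCount U W (f i) = crossCount U W G := by
    intro i
    induction i with
    | zero =>
      intro _
      rw [hf0]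
      exact ⟨hG, rfl⟩
    | succ i ihh =>
      intro hi
      obtain ⟨hreal, hcross⟩ := ihh (by omega)
      have hsw := hswaps i (by omega)
      exact ⟨fun z => (hsw.gdeg_eq z).trans (hreal z),
        (hsw.crossCount_eq hUW).trans hcross⟩
  exact key
end
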